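/- arXiv:1805.11991 — 2 statements merged into one kernel-verified Lean document; each statement's English description precedes it below -/
import Mathlib

section
/- Let K be a field of odd prime characteristic p and let f = Σ_{n=0}^{d} c_n Xⁿ be a polynomial over K of degree d ≥ 2 with p ∣ d and c_{d−1} ≠ 0. Set b = −c_{d−2}/((d−1)·c_{d−1}) (note d−1 is invertible in K since p ∣ d). Then the polynomial g(X) = f(X + b) has degree d, the same coefficients at X^d and X^{d−1} as f, and its coefficient of X^{d−2} is zero. -/
/-- Let `K` be a field of odd prime characteristic `p` and `f` a polynomial of degree
`d ≥ 2` with `p ∣ d` and `c_{d−1} ≠ 0`. With `b = −c_{d−2}/((d−1)·c_{d−1})`, the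
polynomial `g(X) = f(X + b)` has degree `d`, the same coefficients at `X^d` and
`X^{d−1}` as `f`, and vanishing coefficient at `X^{d−2}`. -/
theorem depress_degree_sub_two_coeff_char_dvd
    (K : Type*) [Field K] (p : ℕ) [Fact p.Prime] [CharP K p] (hp : p ≠ 2)
    (f : Polynomial K) (d : ℕ)
    (hd : f.natDegree = d) (hd2 : 2 ≤ d) (hpd : p ∣ d)
    (hc : f.coeff (d - 1) ≠ 0) :
    (f.comp (Polynomial.X + Polynomial.C (-(f.coeff (d - 2)) / (((d - 1 : ℕ) : K) * f.coeff (d - 1))))).natDegree = d ∧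
    (f.comp (Polynomial.X + Polynomial.C (-(f.coeff (d - 2)) / (((d - 1 : ℕ) : K) * f.coeff (d - 1))))).coeff d = f.coeff d ∧
    (f.comp (Polynomial.X + Polynomial.C (-(f.coeff (d - 2)) / (((d - 1 : ℕ) : K) * f.coeff (d - 1))))).coeff (d - 1) = f.coeff (d - 1) ∧
    (f.comp (Polynomial.X + Polynomial.C (-(f.coeff (d - 2)) / (((d - 1 : ℕ) : K) * f.coeff (d - 1))))).coeff (d - 2) = 0 := by
  set b : K := -(f.coeff (d - 2)) / (((d - 1 : ℕ) : K) * f.coeff (d - 1)) with hb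
  rw [← Polynomial.taylor_apply]
  have hdK : ((d : ℕ) : K) = 0 := (CharP.cast_eq_zero_iff K p d).mpr hpd
  have hd1K : ((d - 1 : ℕ) : K) = -1 := by
    rw [Nat.cast_sub (by omega), hdK, Nat.cast_one, zero_sub]
  have hd1ne : ((d - 1 : ℕ) : K) ≠ 0 := by rw [hd1K]; exact neg_ne_zero.mpr one_ne_zero
  have hchoose2 : ((d.choose 2 : ℕ) : K) = 0 := by
    rw [CharP.cast_eq_zero_iff K p]
    have heven : 2 ∣ d * (d - 1) := by
      rcases Nat.even_or_odd d with h | h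
      · exact Dvd.dvd.mul_right h.two_dvd _
      · exact Dvd.dvd.mul_left (Nat.Odd.sub_odd h odd_one).two_dvd _
    have h2 : 2 * d.choose 2 = d * (d - 1) := by
      rw [Nat.choose_two_right, Nat.mul_div_cancel' heven]
    have hpd' : p ∣ 2 * d.choose 2 := h2 ▸ Dvd.dvd.mul_right hpd (d - 1)
    rcases (Nat.Prime.dvd_mul (Fact.out)).mp hpd' with h | h
    · exact absurd (((Nat.prime_dvd_prime_iff_eq Fact.out Nat.prime_two).mp h)) hp
    · exact h
  -- helper for evaluating hasseDeriv
  have heval : ∀ k : ℕ, ∀ n : ℕ, (f.hasseDeriv k).natDegree < n →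
      ((Polynomial.taylor b) f).coeff k = ∑ i ∈ Finset.range n, (f.hasseDeriv k).coeff i * b ^ i := by
    intro k n hn
    rw [Polynomial.taylor_coeff, Polynomial.eval_eq_sum_range' hn]
  have hdegk : ∀ k, (f.hasseDeriv k).natDegree < d - k + 1 := fun k =>
    lt_of_le_of_lt (hd ▸ f.natDegree_hasseDeriv_le k) (Nat.lt_succ_self _)
  refine ⟨by rw [Polynomial.natDegree_taylor, hd], ?_, ?_, ?_⟩
  · rw [heval d (d - d + 1) (hdegk d)]
    simp [Polynomial.hasseDeriv_coeff, Nat.sub_self]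
  · have hk : d - (d - 1) = 1 := by omega
    rw [heval (d - 1) (d - (d - 1) + 1) (hdegk (d - 1)), hk]
    have h1 : (1 + (d - 1) : ℕ) = d := by omega
    have hcd1 : d.choose (d - 1) = d := by
      rw [show d - 1 = d - 1 from rfl, Nat.choose_symm (by omega), Nat.choose_one_right]
    simp only [Finset.sum_range_succ, Finset.sum_range_zero, Polynomial.hasseDeriv_coeff,
      zero_add, h1, hcd1, Nat.choose_self, Nat.cast_one, one_mul, pow_zero, mul_one, pow_one, hdK]
    ring
  · have hk : d - (d - 2) = 2 := by omega
    rw [heval (d - 2) (d - (d - 2) + 1) (hdegk (d - 2)), hk]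
    have h1 : (1 + (d - 2) : ℕ) = d - 1 := by omega
    have h2 : (2 + (d - 2) : ℕ) = d := by omega
    have hcd2 : (d - 1).choose (d - 2) = d - 1 := by
      rw [show d - 2 = d - 1 - 1 by omega, Nat.choose_symm (by omega), Nat.choose_one_right]
    have hdc : d.choose (d - 2) = d.choose 2 := Nat.choose_symm (by omega)
    simp only [Finset.sum_range_succ, Finset.sum_range_zero, Polynomial.hasseDeriv_coeff,
      zero_add, h1, h2, hcd2, hdc, hchoose2, Nat.cast_one, one_mul, pow_zero, mul_one, pow_one,
      zero_mul, mul_zero, add_zero]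
    rw [hb, hd1K]
    field_simp
    rw [Nat.choose_self, Nat.cast_one]
    ring
end

section
/- Let F be a finite field, let E be a finite field extension of F of degree e, and let f be a nonzero squarefree polynomial over F. Then the number of roots of f in E equals the sum of the degrees of those monic irreducible factors of f (over F) whose degree divides e: #{x ∈ E : f(x) = 0} = Σ_{g monic irreducible, g ∣ f, deg g ∣ e} deg g. -/
open Polynomial

lemma aux_dvd (F : Type*) [Field F] [Fintype F] {g : Polynomial F} (hg : g.Monic)
    (hgi : Irreducible g) {e : ℕ} (hd : g.natDegree ∣ e) :
    g ∣ (Polynomial.X ^ (Fintype.card F) ^ e - Polynomial.X) := by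
  haveI : Fact (Irreducible g) := ⟨hgi⟩
  set K := AdjoinRoot g
  haveI : FiniteDimensional F K := PowerBasis.finite (AdjoinRoot.powerBasis hg.ne_zero)
  haveI : Finite K := Module.finite_of_finite F
  haveI : Fintype K := Fintype.ofFinite K
  have hfr : Module.finrank F K = g.natDegree := by
    rw [(AdjoinRoot.powerBasis hg.ne_zero).finrank, AdjoinRoot.powerBasis_dim]
  have hcard : Fintype.card K = Fintype.card F ^ g.natDegree := by
    rw [Module.card_eq_pow_finrank (K := F) (V := K), hfr]
  obtain ⟨k, rfl⟩ := hd
  set x := AdjoinRoot.root g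
  have hx : x ^ (Fintype.card F) ^ (g.natDegree * k) = x := by
    rw [pow_mul, ← hcard]
    exact FiniteField.pow_card_pow k x
  have haev : Polynomial.aeval x ((Polynomial.X : Polynomial F) ^ (Fintype.card F) ^ (g.natDegree * k) - Polynomial.X) = 0 := by
    simp [hx]
  have := minpoly.eq_of_irreducible_of_monic hgi (by rw [AdjoinRoot.aeval_eq, AdjoinRoot.mk_self]) hg
  have h2 := minpoly.dvd F x haev
  rw [← this] at h2
  exact h2

lemma aux_card_roots (F : Type*) [Field F] [Fintype F]
    (E : Type*) [Field E] [Fintype E] [Algebra F E]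
    (e : ℕ) (he : Module.finrank F E = e)
    {g : Polynomial F} (hg : g.Monic) (hgi : Irreducible g) :
    Multiset.card ((g.map (algebraMap F E)).roots) =
      if g.natDegree ∣ e then g.natDegree else 0 := by
  have hcardE : Fintype.card E = Fintype.card F ^ e := by
    rw [Module.card_eq_pow_finrank (K := F) (V := E), he]
  split_ifs with hd
  · have hdvd := aux_dvd F hg hgi hd
    have hdvd2 : g.map (algebraMap F E) ∣ ((X : Polynomial E) ^ Fintype.card F ^ e - X) := by
      have := Polynomial.map_dvd (algebraMap F E) hdvd
      simpa using this
    have hsplit : ((X : Polynomial E) ^ Fintype.card E - X).Splits := by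
      rw [splits_iff_card_roots, FiniteField.roots_X_pow_card_sub_X E,
        FiniteField.X_pow_card_sub_X_natDegree_eq E Fintype.one_lt_card]
      simp
    rw [hcardE] at hsplit
    have hne : ((X : Polynomial E) ^ Fintype.card F ^ e - X) ≠ 0 := by
      rw [← hcardE]; exact FiniteField.X_pow_card_sub_X_ne_zero E Fintype.one_lt_card
    have hs := hsplit.of_dvd hne hdvd2
    rw [splits_iff_card_roots] at hs
    rw [hs, natDegree_map]
  · haveI : FiniteDimensional F E := Module.Finite.of_finite
    rw [Multiset.card_eq_zero]
    by_contra h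
    obtain ⟨x, hx⟩ := Multiset.exists_mem_of_ne_zero h
    have hmap0 : g.map (algebraMap F E) ≠ 0 := by
      simpa using hg.ne_zero
    rw [mem_roots hmap0] at hx
    have haev : Polynomial.aeval x g = 0 := by
      rwa [IsRoot.def, eval_map, ← aeval_def] at hx
    have hmp : g = minpoly F x := minpoly.eq_of_irreducible_of_monic hgi haev hg
    apply hd
    have hint : IsIntegral F x := IsIntegral.of_finite F x
    have h1 : Module.finrank F (IntermediateField.adjoin F {x} : IntermediateField F E) = g.natDegree := by
      rw [IntermediateField.adjoin.finrank hint, ← hmp]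
    have := Module.finrank_mul_finrank F (IntermediateField.adjoin F {x} : IntermediateField F E) E
    rw [h1, he] at this
    exact ⟨_, this.symm⟩



open UniqueFactorizationMonoid in
/-- Let `F` be a finite field and `E` a finite extension of `F` of degree `e`. For a
nonzero squarefree polynomial `f` over `F`, the number of roots of `f` in `E` equals
the sum of the degrees of the monic irreducible factors of `f` whose degree divides `e`. -/
theorem card_roots_squarefree_in_extension
    (F : Type*) [Field F] [Fintype F]
    (E : Type*) [Field E] [Fintype E] [Algebra F E]
    (e : ℕ) (he : Module.finrank F E = e)
    (f : Polynomial F) (hf0 : f ≠ 0) (hf : Squarefree f) :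
    Nat.card {x : E // Polynomial.aeval x f = 0} =
      ∑ᶠ g ∈ {g : Polynomial F | g.Monic ∧ Irreducible g ∧ g ∣ f ∧ g.natDegree ∣ e},
        g.natDegree := by
  classical
  set φ := algebraMap F E with hφdef
  have hφ : Function.Injective φ := φ.injective
  have hfE0 : f.map φ ≠ 0 := (Polynomial.map_ne_zero_iff hφ).mpr hf0
  have hsep : f.Separable := PerfectField.separable_iff_squarefree.mpr hf
  have hnodup : (f.map φ).roots.Nodup := nodup_roots hsep.map
  -- step 1 : Nat.card = Multiset.card of roots
  have hset : {x : E | Polynomial.aeval x f = 0} = ↑(f.map φ).roots.toFinset := by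
    ext x
    simp only [Set.mem_setOf_eq, Finset.coe_sort_coe, Multiset.mem_toFinset, Finset.mem_coe,
      mem_roots hfE0, IsRoot.def, eval_map, aeval_def]
    exact Iff.rfl
  have h1 : Nat.card {x : E // Polynomial.aeval x f = 0} = Multiset.card (f.map φ).roots := by
    have h0 : Nat.card {x : E // Polynomial.aeval x f = 0}
        = {x : E | Polynomial.aeval x f = 0}.ncard := Nat.card_coe_set_eq _
    rw [h0, hset, Set.ncard_coe_finset, Multiset.toFinset_card_of_nodup hnodup]
  -- step 2 : factor f
  set s := normalizedFactors f with hs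
  have hsnd : s.Nodup := (squarefree_iff_nodup_normalizedFactors hf0).mp hf
  have hmem : ∀ g ∈ s, g.Monic ∧ Irreducible g ∧ g ∣ f := by
    intro g hgmem
    have hirr := irreducible_of_normalized_factor g hgmem
    have hnorm := normalize_normalized_factor g hgmem
    have hmon : g.Monic := by
      have := Polynomial.monic_normalize (p := g) hirr.ne_zero
      rwa [hnorm] at this
    exact ⟨hmon, hirr, dvd_of_mem_normalizedFactors hgmem⟩
  obtain ⟨u, hu⟩ := prod_normalizedFactors hf0
  obtain ⟨c, hcu, hcC⟩ := Polynomial.isUnit_iff.mp u.isUnit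
  have hfactor : f = C c * s.prod := by
    rw [← hu, hcC, mul_comm]
  have h0nm : (0 : Polynomial E) ∉ s.map (Polynomial.map φ) := by
    intro h0
    obtain ⟨g, hg, hg0⟩ := Multiset.mem_map.mp h0
    exact (hmem g hg).2.1.ne_zero ((Polynomial.map_eq_zero_iff hφ).mp hg0)
  have hroots : (f.map φ).roots = (s.map (Polynomial.map φ)).bind roots := by
    rw [hfactor, Polynomial.map_mul, Polynomial.map_C,
      roots_C_mul _ ((map_ne_zero_iff φ hφ).mpr hcu.ne_zero),
      Polynomial.map_multiset_prod, roots_multiset_prod _ h0nm]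
  -- step 3 : card as a sum
  have h2 : Multiset.card (f.map φ).roots
      = (s.map fun g => Multiset.card ((g.map φ).roots)).sum := by
    rw [hroots, Multiset.card_bind, Multiset.map_map]
    rfl
  have h3 : (s.map fun g => Multiset.card ((g.map φ).roots)).sum
      = (s.map fun g => if g.natDegree ∣ e then g.natDegree else 0).sum := by
    congr 1
    refine Multiset.map_congr rfl ?_
    intro g hg
    exact aux_card_roots F E e he (hmem g hg).1 (hmem g hg).2.1
  have h4 : (s.map fun g => if g.natDegree ∣ e then g.natDegree else 0).sum
      = ∑ g ∈ s.toFinset, (if g.natDegree ∣ e then g.natDegree else 0) := by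
    rw [Finset.sum, Multiset.toFinset_val, Multiset.dedup_eq_self.mpr hsnd]
  have h5 : ∑ g ∈ s.toFinset, (if g.natDegree ∣ e then g.natDegree else 0)
      = ∑ g ∈ s.toFinset.filter (fun g => g.natDegree ∣ e), g.natDegree :=
    (Finset.sum_filter _ _).symm
  -- step 4 : identify the index set
  have hsetidx : {g : Polynomial F | g.Monic ∧ Irreducible g ∧ g ∣ f ∧ g.natDegree ∣ e}
      = ↑(s.toFinset.filter (fun g => g.natDegree ∣ e)) := by
    ext g
    simp only [Set.mem_setOf_eq, Finset.coe_filter, Multiset.mem_toFinset]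
    constructor
    · rintro ⟨hmon, hirr, hdvd, hdeg⟩
      refine ⟨?_, hdeg⟩
      obtain ⟨q, hq, hassoc⟩ := exists_mem_normalizedFactors_of_dvd hf0 hirr hdvd
      rwa [Polynomial.eq_of_monic_of_associated hmon (hmem q hq).1 hassoc]
    · rintro ⟨hg, hdeg⟩
      obtain ⟨hmon, hirr, hdvd⟩ := hmem g hg
      exact ⟨hmon, hirr, hdvd, hdeg⟩
  rw [h1, h2, h3, h4, h5, hsetidx, finsum_mem_coe_finset]
end
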